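/- Let l ≥ 1 and suppose u ∈ H^{2l+1}(0,L) and the combination Σ_{j=1}^{l} (−1)^{j+1} D^{2j+1} u belongs to H^l(0,L). Then D^{(2l+1)+l} u ∈ L^2(0,L) and there is a constant C depending only on L and l such that ‖D^{3l+1} u‖_{L^2}² ≤ C ( ‖u‖_{H^{2l+1}}² + ‖Σ_{j=1}^{l} (−1)^{j+1} D^{2j+1} u‖_{H^l}² ). -/

import Mathlib

/-- Smoothing estimate: if `u ∈ H^{2l+1}(0,L)` and
`g = ∑_{j=1}^l (−1)^{j+1} D^{2j+1} u ∈ H^l(0,L)`, then `D^{3l+1}u ∈ L²` and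
`‖D^{3l+1}u‖² ≤ C (‖u‖²_{H^{2l+1}} + ‖g‖²_{H^l})` with `C = C(L,l)`.
`D i` is the `i`-th derivative of `u = D 0`. -/
theorem stmt_9 (L : ℝ) (hL : 0 < L) (l : ℕ) (hl : 1 ≤ l) :
    ∃ C > (0:ℝ), ∀ D : ℕ → ℝ → ℝ,
      (∀ i < 3*l+1, ∀ x ∈ Set.Icc (0:ℝ) L, HasDerivAt (D i) (D (i+1) x) x) →
      (∀ i ≤ 2*l+1, IntervalIntegrable (fun x => (D i x)^2) MeasureTheory.volume 0 L) →
      (∀ i ≤ l, IntervalIntegrable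
        (fun x => (∑ j ∈ Finset.Icc 1 l, (-1:ℝ)^(j+1) * D (2*j+1+i) x)^2)
        MeasureTheory.volume 0 L) →
      IntervalIntegrable (fun x => (D (3*l+1) x)^2) MeasureTheory.volume 0 L ∧
      (∫ x in (0:ℝ)..L, (D (3*l+1) x)^2)
        ≤ C * ((∑ i ∈ Finset.range (2*l+2), ∫ x in (0:ℝ)..L, (D i x)^2)
            + ∑ i ∈ Finset.range (l+1), ∫ x in (0:ℝ)..L,
                (∑ j ∈ Finset.Icc 1 l, (-1:ℝ)^(j+1) * D (2*j+1+i) x)^2) := by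
  obtain ⟨m, rfl⟩ : ∃ m, l = m + 1 := ⟨l - 1, by omega⟩
  set A : ℝ := 2 + 2 * (m+1 : ℕ) * (m+1 : ℕ) with hAdef
  have hA1 : (1:ℝ) ≤ A := by
    have : (0:ℝ) ≤ 2 * (m+1 : ℕ) * (m+1 : ℕ) := by positivity
    linarith [this]
  refine ⟨A ^ (m+1), by positivity, ?_⟩
  intro D h1 h2 h3
  -- nonnegativity of interval integrals of squares
  have hterm : ∀ f : ℝ → ℝ, (∀ x, 0 ≤ f x) → 0 ≤ ∫ x in (0:ℝ)..L, f x := fun f hf =>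
    intervalIntegral.integral_nonneg hL.le (fun x _ => hf x)
  set X : ℝ := (∑ i ∈ Finset.range (2*(m+1)+2), ∫ x in (0:ℝ)..L, (D i x)^2)
      + ∑ i ∈ Finset.range ((m+1)+1), ∫ x in (0:ℝ)..L,
          (∑ j ∈ Finset.Icc 1 (m+1), (-1:ℝ)^(j+1) * D (2*j+1+i) x)^2 with hXdef
  have hsum1 : ∀ i, i ≤ 2*(m+1)+1 →
      (∫ x in (0:ℝ)..L, (D i x)^2) ≤ ∑ i ∈ Finset.range (2*(m+1)+2), ∫ x in (0:ℝ)..L, (D i x)^2 :=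
    fun i hi => Finset.single_le_sum (f := fun i => ∫ x in (0:ℝ)..L, (D i x)^2)
      (fun i _ => hterm _ (fun x => sq_nonneg _)) (Finset.mem_range.2 (by omega))
  have hsum2nn : 0 ≤ ∑ i ∈ Finset.range ((m+1)+1), ∫ x in (0:ℝ)..L,
      (∑ j ∈ Finset.Icc 1 (m+1), (-1:ℝ)^(j+1) * D (2*j+1+i) x)^2 :=
    Finset.sum_nonneg fun i _ => hterm _ (fun x => sq_nonneg _)
  have hsum1nn : 0 ≤ ∑ i ∈ Finset.range (2*(m+1)+2), ∫ x in (0:ℝ)..L, (D i x)^2 :=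
    Finset.sum_nonneg fun i _ => hterm _ (fun x => sq_nonneg _)
  have hGX : ∀ i, i ≤ m+1 → (∫ x in (0:ℝ)..L,
      (∑ j ∈ Finset.Icc 1 (m+1), (-1:ℝ)^(j+1) * D (2*j+1+i) x)^2) ≤ X := by
    intro i hi
    have := Finset.single_le_sum (f := fun i => ∫ x in (0:ℝ)..L,
        (∑ j ∈ Finset.Icc 1 (m+1), (-1:ℝ)^(j+1) * D (2*j+1+i) x)^2)
      (fun i _ => hterm _ (fun x => sq_nonneg _)) (Finset.mem_range.2 (by omega : i < (m+1)+1))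
    rw [hXdef]; linarith
  have hXnn : 0 ≤ X := by rw [hXdef]; linarith
  -- measurability
  have hmeas : ∀ k, k ≤ m+1 →
      MeasureTheory.AEStronglyMeasurable (fun x => (D (2*(m+1)+1+k) x)^2)
        (MeasureTheory.volume.restrict (Set.uIoc (0:ℝ) L)) := by
    intro k hk
    have hsub : Set.uIoc (0:ℝ) L ⊆ Set.Icc 0 L := by
      rw [Set.uIoc_of_le hL.le]; exact Set.Ioc_subset_Icc_self
    have hd : ∀ x ∈ Set.Icc (0:ℝ) L, deriv (D (2*(m+1)+k)) x = D (2*(m+1)+1+k) x := by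
      intro x hx
      have h := h1 (2*(m+1)+k) (by omega) x hx
      rw [show 2*(m+1)+k+1 = 2*(m+1)+1+k by omega] at h
      exact h.deriv
    have hm1 : MeasureTheory.AEStronglyMeasurable (D (2*(m+1)+1+k))
        (MeasureTheory.volume.restrict (Set.uIoc (0:ℝ) L)) := by
      refine (measurable_deriv (D (2*(m+1)+k))).aestronglyMeasurable.congr ?_
      refine (MeasureTheory.ae_restrict_iff' measurableSet_uIoc).2
        (MeasureTheory.ae_of_all _ fun x hx => hd x (hsub hx))
    exact (hm1.mul hm1).congr (MeasureTheory.ae_of_all _ fun x => (pow_two _).symm)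
  -- the pointwise sign identity
  have hsq : ∀ n : ℕ, ((-1:ℝ)^(n+1+1))^2 = 1 := fun n => by
    rw [← pow_mul, mul_comm, pow_mul, neg_one_sq, one_pow]
  -- key induction
  have key : ∀ k, k ≤ m+1 →
      IntervalIntegrable (fun x => (D (2*(m+1)+1+k) x)^2) MeasureTheory.volume 0 L ∧
      (∫ x in (0:ℝ)..L, (D (2*(m+1)+1+k) x)^2) ≤ A^k * X := by
    intro k
    induction k using Nat.strong_induction_on with
    | _ k ih =>
      intro hk
      match k, hk, ih with
      | 0, hk, ih =>
        constructor
        · simpa using h2 (2*(m+1)+1) le_rfl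
        · have h0 := hsum1 (2*(m+1)+1+0) (by omega)
          simp only [pow_zero, one_mul]
          rw [hXdef]; linarith
      | (n+1), hk, ih =>
        -- identity: D (2(m+1)+1+(n+1)) = ±(G - S)
        have hGid : ∀ x : ℝ, D (2*(m+1)+1+(n+1)) x
            = (-1:ℝ)^(m+1+1) *
              ((∑ j ∈ Finset.Icc 1 (m+1), (-1:ℝ)^(j+1) * D (2*j+1+(n+1)) x)
                - ∑ j ∈ Finset.Icc 1 m, (-1:ℝ)^(j+1) * D (2*j+1+(n+1)) x) := by
          intro x
          rw [Finset.sum_Icc_succ_top (by omega : 1 ≤ m+1)]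
          have h := hsq m
          linear_combination (-(D (2*(m+1)+1+(n+1)) x)) * h
        -- pointwise bound
        have hptw : ∀ x : ℝ, (D (2*(m+1)+1+(n+1)) x)^2
            ≤ 2 * (∑ j ∈ Finset.Icc 1 (m+1), (-1:ℝ)^(j+1) * D (2*j+1+(n+1)) x)^2
              + 2*(m:ℝ) * ∑ j ∈ Finset.Icc 1 m, (D (2*j+1+(n+1)) x)^2 := by
          intro x
          set Gx := ∑ j ∈ Finset.Icc 1 (m+1), (-1:ℝ)^(j+1) * D (2*j+1+(n+1)) x
          set Sx := ∑ j ∈ Finset.Icc 1 m, (-1:ℝ)^(j+1) * D (2*j+1+(n+1)) x with hSx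
          have e1 : (D (2*(m+1)+1+(n+1)) x)^2 = (Gx - Sx)^2 := by
            rw [hGid x, mul_pow, hsq m, one_mul]
          have e2 : Sx^2 ≤ (m:ℝ) * ∑ j ∈ Finset.Icc 1 m, (D (2*j+1+(n+1)) x)^2 := by
            have := sq_sum_le_card_mul_sum_sq
              (s := Finset.Icc 1 m) (f := fun j => (-1:ℝ)^(j+1) * D (2*j+1+(n+1)) x)
            rw [Nat.card_Icc] at this
            simp only [Nat.add_sub_cancel] at this
            calc Sx^2 ≤ (m:ℝ) * ∑ j ∈ Finset.Icc 1 m, ((-1:ℝ)^(j+1) * D (2*j+1+(n+1)) x)^2 :=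
                  this
              _ = (m:ℝ) * ∑ j ∈ Finset.Icc 1 m, (D (2*j+1+(n+1)) x)^2 := by
                  congr 1
                  refine Finset.sum_congr rfl fun j _ => ?_
                  rw [mul_pow, ← pow_mul, mul_comm (j+1) 2, pow_mul, neg_one_sq, one_pow, one_mul]
          nlinarith [sq_nonneg (Gx + Sx), sq_nonneg (Gx - Sx)]
        -- control of the lower-order terms
        have hjint : ∀ j ∈ Finset.Icc 1 m,
            IntervalIntegrable (fun x => (D (2*j+1+(n+1)) x)^2) MeasureTheory.volume 0 L ∧
            (∫ x in (0:ℝ)..L, (D (2*j+1+(n+1)) x)^2) ≤ A^n * X := by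
          intro j hj
          rw [Finset.mem_Icc] at hj
          have hAn : (1:ℝ) ≤ A^n := by
            have := pow_le_pow_right₀ hA1 (Nat.zero_le n)
            rwa [pow_zero] at this
          by_cases hcase : 2*j+1+(n+1) ≤ 2*(m+1)+1
          · refine ⟨h2 _ hcase, ?_⟩
            have := hsum1 (2*j+1+(n+1)) hcase
            have hXle : (∫ x in (0:ℝ)..L, (D (2*j+1+(n+1)) x)^2) ≤ X := by
              rw [hXdef]; linarith
            nlinarith [hXnn, hXle, hAn]
          · set k' := 2*j+1+(n+1) - (2*(m+1)+1) with hk'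
            have hidx : 2*j+1+(n+1) = 2*(m+1)+1+k' := by omega
            have hlt : k' < n+1 := by omega
            have hle : k' ≤ m+1 := by omega
            obtain ⟨hi1, hi2⟩ := ih k' hlt hle
            rw [hidx]
            refine ⟨hi1, hi2.trans ?_⟩
            exact mul_le_mul_of_nonneg_right (pow_le_pow_right₀ hA1 (by omega)) hXnn
        -- integrability of the majorant
        have hsumint : IntervalIntegrable
            (fun x => ∑ j ∈ Finset.Icc 1 m, (D (2*j+1+(n+1)) x)^2) MeasureTheory.volume 0 L := by
          have h := IntervalIntegrable.sum (μ := MeasureTheory.volume) (a := (0:ℝ)) (b := L)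
            (Finset.Icc 1 m) (f := fun j => fun x => (D (2*j+1+(n+1)) x)^2)
            (fun j hj => (hjint j hj).1)
          have e : (fun x => ∑ j ∈ Finset.Icc 1 m, (D (2*j+1+(n+1)) x)^2)
              = ∑ j ∈ Finset.Icc 1 m, fun x => (D (2*j+1+(n+1)) x)^2 := by
            ext x
            simp [Finset.sum_apply]
          rw [e]; exact h
        have hG2int : IntervalIntegrable
            (fun x => (∑ j ∈ Finset.Icc 1 (m+1), (-1:ℝ)^(j+1) * D (2*j+1+(n+1)) x)^2)
            MeasureTheory.volume 0 L := h3 (n+1) hk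
        have hHint : IntervalIntegrable
            (fun x => 2 * (∑ j ∈ Finset.Icc 1 (m+1), (-1:ℝ)^(j+1) * D (2*j+1+(n+1)) x)^2
              + 2*(m:ℝ) * ∑ j ∈ Finset.Icc 1 m, (D (2*j+1+(n+1)) x)^2)
            MeasureTheory.volume 0 L :=
          (hG2int.const_mul 2).add (hsumint.const_mul (2*(m:ℝ)))
        -- integrability of the target
        have hres : IntervalIntegrable (fun x => (D (2*(m+1)+1+(n+1)) x)^2)
            MeasureTheory.volume 0 L := by
          rw [intervalIntegrable_iff] at hHint ⊢
          refine hHint.mono' (hmeas (n+1) hk) (MeasureTheory.ae_of_all _ fun x => ?_)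
          rw [Real.norm_eq_abs, abs_of_nonneg (sq_nonneg _)]
          exact hptw x
        refine ⟨hres, ?_⟩
        have hmono : (∫ x in (0:ℝ)..L, (D (2*(m+1)+1+(n+1)) x)^2)
            ≤ ∫ x in (0:ℝ)..L,
                (2 * (∑ j ∈ Finset.Icc 1 (m+1), (-1:ℝ)^(j+1) * D (2*j+1+(n+1)) x)^2
                  + 2*(m:ℝ) * ∑ j ∈ Finset.Icc 1 m, (D (2*j+1+(n+1)) x)^2) :=
          intervalIntegral.integral_mono_on hL.le hres hHint (fun x _ => hptw x)
        have hHval : (∫ x in (0:ℝ)..L,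
              (2 * (∑ j ∈ Finset.Icc 1 (m+1), (-1:ℝ)^(j+1) * D (2*j+1+(n+1)) x)^2
                + 2*(m:ℝ) * ∑ j ∈ Finset.Icc 1 m, (D (2*j+1+(n+1)) x)^2))
            = 2 * (∫ x in (0:ℝ)..L,
                (∑ j ∈ Finset.Icc 1 (m+1), (-1:ℝ)^(j+1) * D (2*j+1+(n+1)) x)^2)
              + 2*(m:ℝ) * ∑ j ∈ Finset.Icc 1 m,
                  ∫ x in (0:ℝ)..L, (D (2*j+1+(n+1)) x)^2 := by
          rw [intervalIntegral.integral_add (hG2int.const_mul 2) (hsumint.const_mul (2*(m:ℝ))),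
            intervalIntegral.integral_const_mul, intervalIntegral.integral_const_mul,
            intervalIntegral.integral_finset_sum (fun j hj => (hjint j hj).1)]
        have hGbd := hGX (n+1) hk
        have hSbd : (∑ j ∈ Finset.Icc 1 m, ∫ x in (0:ℝ)..L, (D (2*j+1+(n+1)) x)^2)
            ≤ (m:ℝ) * (A^n * X) := by
          calc (∑ j ∈ Finset.Icc 1 m, ∫ x in (0:ℝ)..L, (D (2*j+1+(n+1)) x)^2)
              ≤ ∑ j ∈ Finset.Icc 1 m, A^n * X :=
                Finset.sum_le_sum (fun j hj => (hjint j hj).2)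
            _ = (m:ℝ) * (A^n * X) := by
                rw [Finset.sum_const, Nat.card_Icc, Nat.add_sub_cancel, nsmul_eq_mul]
        have hAn : (1:ℝ) ≤ A^n := by
          have := pow_le_pow_right₀ hA1 (Nat.zero_le n)
          rwa [pow_zero] at this
        have hApow : A^(n+1) = A * A^n := by rw [pow_succ, mul_comm]
        have hmnn : (0:ℝ) ≤ (m:ℝ) := Nat.cast_nonneg m
        have hAeq : A = 2 + 2 * ((m:ℝ)+1) * ((m:ℝ)+1) := by
          rw [hAdef]; push_cast; ring
        have h0 : 0 ≤ A^n * X := mul_nonneg (by linarith) hXnn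
        have ht : A^(n+1) * X = (2 + 2*((m:ℝ)+1)*((m:ℝ)+1)) * (A^n * X) := by
          rw [hApow, hAeq]; ring
        have h2m : 2*(m:ℝ) * (∑ j ∈ Finset.Icc 1 m, ∫ x in (0:ℝ)..L, (D (2*j+1+(n+1)) x)^2)
            ≤ 2*(m:ℝ) * ((m:ℝ) * (A^n * X)) :=
          mul_le_mul_of_nonneg_left hSbd (by positivity)
        have h2X : X ≤ A^n * X := by nlinarith [hXnn, hAn]
        nlinarith [hmono, hHval, hGbd, h2m, h2X, h0, hmnn, mul_nonneg hmnn h0,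
          mul_nonneg hmnn (mul_nonneg hmnn h0)]
  obtain ⟨hint, hbd⟩ := key (m+1) le_rfl
  rw [show 3*(m+1)+1 = 2*(m+1)+1+(m+1) by ring] at *
  exact ⟨hint, hbd⟩
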